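/- Let (R, m) be a one-dimensional Cohen-Macaulay Noetherian local ring with infinite residue field possessing a canonical ideal ω_R with R ⊆ ω_R ⊆ R̄, let I be an m-primary ideal of R, let zR (z an invertible element of the total ring of fractions Q(R)) be a minimal reduction of (ω_R : I), and let a, b ∈ R. Then the set K = { x/z + (y/z)t : x ∈ (ω_R : I), y ∈ ω_R }, with R(I)_{a,b}-module structure given by (r+it)(x/z + (y/z)t) = (rx/z − biy/z) + (ry/z + ix/z − aiy/z)t, is a canonical ideal of R(I)_{a,b} (i.e., a fractional ideal isomorphic as an R(I)_{a,b}-module to Hom_R(R(I)_{a,b}, ω_R)) satisfying R(I)_{a,b} ⊆ K ⊆ overline{R(I)_{a,b}}, the integral closure of R(I)_{a,b} in its total ring of fractions. -/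

import Mathlib

open IsLocalRing

universe u

/-! ### The family of rings `R(I)_{a,b}`

`RIab R I a b` is the quotient of the Rees algebra `⊕ₙ Iⁿtⁿ` by the contraction of the
ideal generated by `t² + a t + b`.  As an `R`-module it is `R ⊕ I`; we realize it as the
type of pairs `r + i t` with `r ∈ R`, `i ∈ I`, with multiplication
`(r + i t)(s + j t) = (r s - b i j) + (r j + s i - a i j) t`. -/
@[ext]
structure RIab (R : Type u) [CommRing R] (I : Ideal R) (a b : R) : Type u where
  r : R
  i : R
  hi : i ∈ I

namespace RIab

variable {R : Type u} [CommRing R] {I : Ideal R} {a b : R}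

instance : Zero (RIab R I a b) := ⟨⟨0, 0, I.zero_mem⟩⟩
instance : One (RIab R I a b) := ⟨⟨1, 0, I.zero_mem⟩⟩
instance : Add (RIab R I a b) := ⟨fun x y => ⟨x.r + y.r, x.i + y.i, I.add_mem x.hi y.hi⟩⟩
instance : Neg (RIab R I a b) := ⟨fun x => ⟨-x.r, -x.i, I.neg_mem x.hi⟩⟩
instance : Mul (RIab R I a b) :=
  ⟨fun x y => ⟨x.r * y.r - b * (x.i * y.i),
    x.r * y.i + y.r * x.i - a * (x.i * y.i),
    I.sub_mem (I.add_mem (I.mul_mem_left _ y.hi) (I.mul_mem_left _ x.hi))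
      (I.mul_mem_left _ (I.mul_mem_left _ y.hi))⟩⟩

@[simp] lemma zero_r : (0 : RIab R I a b).r = 0 := rfl
@[simp] lemma zero_i : (0 : RIab R I a b).i = 0 := rfl
@[simp] lemma one_r : (1 : RIab R I a b).r = 1 := rfl
@[simp] lemma one_i : (1 : RIab R I a b).i = 0 := rfl
@[simp] lemma add_r (x y : RIab R I a b) : (x + y).r = x.r + y.r := rfl
@[simp] lemma add_i (x y : RIab R I a b) : (x + y).i = x.i + y.i := rfl
@[simp] lemma neg_r (x : RIab R I a b) : (-x).r = -x.r := rfl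
@[simp] lemma neg_i (x : RIab R I a b) : (-x).i = -x.i := rfl
@[simp] lemma mul_r (x y : RIab R I a b) : (x * y).r = x.r * y.r - b * (x.i * y.i) := rfl
@[simp] lemma mul_i (x y : RIab R I a b) :
    (x * y).i = x.r * y.i + y.r * x.i - a * (x.i * y.i) := rfl

instance instCommRing : CommRing (RIab R I a b) where
  add_assoc x y z := by ext <;> simp <;> ring
  zero_add x := by ext <;> simp
  add_zero x := by ext <;> simp
  add_comm x y := by ext <;> simp <;> ring
  neg_add_cancel x := by ext <;> simp
  mul_assoc x y z := by ext <;> simp <;> ring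
  one_mul x := by ext <;> simp
  mul_one x := by ext <;> simp
  left_distrib x y z := by ext <;> simp <;> ring
  right_distrib x y z := by ext <;> simp <;> ring
  zero_mul x := by ext <;> simp
  mul_zero x := by ext <;> simp
  mul_comm x y := by ext <;> simp <;> ring
  nsmul := nsmulRec
  zsmul := zsmulRec

/-- The canonical ring homomorphism `R → R(I)_{a,b}`, `r ↦ r + 0·t`. -/
def C : R →+* RIab R I a b where
  toFun r := ⟨r, 0, I.zero_mem⟩
  map_one' := rfl
  map_mul' x y := by ext <;> simp
  map_zero' := rfl
  map_add' x y := by ext <;> simp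

instance instAlgebra : Algebra R (RIab R I a b) := (C (I := I) (a := a) (b := b)).toAlgebra

@[simp] lemma algebraMap_r (c : R) : (algebraMap R (RIab R I a b) c).r = c := rfl
@[simp] lemma algebraMap_i (c : R) : (algebraMap R (RIab R I a b) c).i = 0 := rfl

instance [Nontrivial R] : Nontrivial (RIab R I a b) :=
  ⟨⟨0, 1, fun h => zero_ne_one (congrArg RIab.r h)⟩⟩

variable [IsLocalRing R]

lemma isUnit_of_isUnit_r (hI : I ≠ ⊤) {x : RIab R I a b} (hx : IsUnit x.r) : IsUnit x := by
  have hiI : x.i ∈ maximalIdeal R := le_maximalIdeal hI x.hi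
  have hdet : IsUnit (x.r * x.r - a * x.r * x.i + b * (x.i * x.i)) := by
    by_contra h
    have hmem : x.r * x.r - a * x.r * x.i + b * (x.i * x.i) ∈ maximalIdeal R := by
      rwa [IsLocalRing.mem_maximalIdeal, mem_nonunits_iff]
    have : x.r * x.r ∈ maximalIdeal R := by
      have := (maximalIdeal R).add_mem hmem
        ((maximalIdeal R).sub_mem
          ((maximalIdeal R).mul_mem_left (a * x.r) hiI)
          ((maximalIdeal R).mul_mem_left (b * x.i) hiI))
      have h2 : x.r * x.r - a * x.r * x.i + b * (x.i * x.i) +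
          (a * x.r * x.i - b * x.i * x.i) = x.r * x.r := by ring
      rwa [h2] at this
    exact (IsLocalRing.mem_maximalIdeal _).mp this (hx.mul hx)
  obtain ⟨v, hv⟩ := hdet.exists_left_inv
  refine IsUnit.of_mul_eq_one ⟨v * (x.r - a * x.i), v * (-x.i),
    I.mul_mem_left _ (I.neg_mem x.hi)⟩ ?_
  ext
  · show x.r * (v * (x.r - a * x.i)) - b * (x.i * (v * (-x.i))) = 1
    linear_combination hv
  · show x.r * (v * (-x.i)) + v * (x.r - a * x.i) * x.i - a * (x.i * (v * (-x.i))) = 0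
    ring

instance instIsLocalRing [Fact (I ≠ ⊤)] : IsLocalRing (RIab R I a b) := by
  refine IsLocalRing.of_isUnit_or_isUnit_one_sub_self fun x => ?_
  by_cases hx : IsUnit x.r
  · exact Or.inl (isUnit_of_isUnit_r Fact.out hx)
  · refine Or.inr (isUnit_of_isUnit_r Fact.out ?_)
    have hxm : x.r ∈ maximalIdeal R := by rwa [IsLocalRing.mem_maximalIdeal, mem_nonunits_iff]
    show IsUnit (1 - x).r
    have : (1 - x).r = 1 - x.r := by
      show (1 + -x).r = 1 - x.r
      simp; ring
    rw [this]
    by_contra h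
    have : (1 : R) ∈ maximalIdeal R := by
      have h1 : 1 - x.r ∈ maximalIdeal R := by
        rwa [IsLocalRing.mem_maximalIdeal, mem_nonunits_iff]
      have := (maximalIdeal R).add_mem h1 hxm
      simpa using this
    exact (maximalIdeal.isMaximal R).ne_top ((Ideal.eq_top_iff_one _).mpr this)

lemma mem_maximalIdeal_iff [Fact (I ≠ ⊤)] (x : RIab R I a b) :
    x ∈ maximalIdeal (RIab R I a b) ↔ x.r ∈ maximalIdeal R := by
  constructor
  · intro hx
    rw [IsLocalRing.mem_maximalIdeal, mem_nonunits_iff] at hx ⊢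
    intro hr
    exact hx (isUnit_of_isUnit_r Fact.out hr)
  · intro hx
    rw [IsLocalRing.mem_maximalIdeal, mem_nonunits_iff] at hx ⊢
    intro hu
    obtain ⟨y, hy⟩ := hu.exists_right_inv
    refine hx ?_
    have h1 : x.r * y.r - b * (x.i * y.i) = 1 := congrArg RIab.r hy
    have hIm : x.i * y.i ∈ maximalIdeal R :=
      le_maximalIdeal Fact.out (I.mul_mem_right _ x.hi)
    by_contra h
    have hxm : x.r ∈ maximalIdeal R := by rwa [IsLocalRing.mem_maximalIdeal, mem_nonunits_iff]
    have : (1 : R) ∈ maximalIdeal R := by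
      rw [← h1]
      exact (maximalIdeal R).sub_mem ((maximalIdeal R).mul_mem_right _ hxm)
        ((maximalIdeal R).mul_mem_left _ hIm)
    exact (maximalIdeal.isMaximal R).ne_top ((Ideal.eq_top_iff_one _).mpr this)

lemma algebraMap_mem_nonZeroDivisors {u : R} (hu : u ∈ nonZeroDivisors R) :
    algebraMap R (RIab R I a b) u ∈ nonZeroDivisors (RIab R I a b) := by
  rw [mem_nonZeroDivisors_iff_right]
  intro x hx
  have h1 : x.r * u - b * (x.i * 0) = 0 := congrArg RIab.r hx
  have h2 : x.r * 0 + u * x.i - a * (x.i * 0) = 0 := congrArg RIab.i hx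
  simp only [mul_zero, sub_zero, zero_add] at h1 h2
  rw [mul_comm] at h2
  ext
  · exact (mem_nonZeroDivisors_iff_right.mp hu) _ h1
  · exact (mem_nonZeroDivisors_iff_right.mp hu) _ h2

/-- The induced homomorphism between total quotient rings `Q(R) → Q(R(I)_{a,b})`. -/
noncomputable def mapFrac (I : Ideal R) (a b : R) :
    FractionRing R →+* FractionRing (RIab R I a b) :=
  IsLocalization.map (T := nonZeroDivisors (RIab R I a b)) _
    (algebraMap R (RIab R I a b)) (fun _ hu => algebraMap_mem_nonZeroDivisors hu)

/-- The element `t ∈ Q(R(I)_{a,b})`, realized as `(0 + i₀ t)/i₀` for a regular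
element `i₀ ∈ I`. -/
noncomputable def tau (I : Ideal R) (a b : R) (i₀ : R) (h : i₀ ∈ I)
    (hreg : i₀ ∈ nonZeroDivisors R) : FractionRing (RIab R I a b) :=
  IsLocalization.mk' _ (⟨0, i₀, h⟩ : RIab R I a b)
    (⟨algebraMap R (RIab R I a b) i₀, algebraMap_mem_nonZeroDivisors hreg⟩ :
      nonZeroDivisors (RIab R I a b))

end RIab

/-! ### Commutative-algebra notions used in the paper -/

instance (priority := 10) factMaximalIdealNeTop (R : Type u) [CommRing R] [IsLocalRing R] :
    Fact (maximalIdeal R ≠ ⊤) := ⟨(maximalIdeal.isMaximal R).ne_top⟩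

instance quotientIsLocalRing (R : Type u) [CommRing R] [IsLocalRing R] (I : Ideal R)
    [hI : Fact (I ≠ ⊤)] : IsLocalRing (R ⧸ I) :=
  have : Nontrivial (R ⧸ I) := Ideal.Quotient.nontrivial_iff.mpr hI.out
  IsLocalRing.of_surjective' (Ideal.Quotient.mk I) Ideal.Quotient.mk_surjective

section CA

variable (R : Type u) [CommRing R]

/-- The length `λ_R(M)` of an `R`-module, as the Krull dimension of its submodule lattice. -/
noncomputable def modLength (M : Type*) [AddCommGroup M] [Module R M] : ℕ∞ :=
  (Order.krullDim (Submodule R M)).unbotD 0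

/-- `λ_R(A / B)` (more precisely `λ_R(A/(A ∩ B))`) for submodules `A B` of a module. -/
noncomputable def subquotLength {M : Type*} [AddCommGroup M] [Module R M]
    (A B : Submodule R M) : ℕ∞ :=
  modLength R (↥A ⧸ (Submodule.comap A.subtype B))

/-- The depth of a module over a local ring: the supremum of the lengths of (weakly)
regular sequences contained in the maximal ideal. -/
noncomputable def moduleDepth [IsLocalRing R] (M : Type*) [AddCommGroup M] [Module R M] : ℕ∞ :=
  sSup {n : ℕ∞ | ∃ rs : List R, (∀ x ∈ rs, x ∈ maximalIdeal R) ∧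
    RingTheory.Sequence.IsWeaklyRegular M rs ∧ (rs.length : ℕ∞) = n}

/-- A local ring is Cohen-Macaulay if its depth equals its Krull dimension. -/
def IsCohenMacaulayLocalRing [IsLocalRing R] : Prop :=
  (moduleDepth R R : WithBot ℕ∞) = ringKrullDim R

/-- A maximal Cohen-Macaulay module: finitely generated with depth equal to `dim R`. -/
def IsMaximalCohenMacaulay [IsLocalRing R] (M : Type*) [AddCommGroup M] [Module R M] : Prop :=
  Module.Finite R M ∧ (moduleDepth R M : WithBot ℕ∞) = ringKrullDim R

/-- A Cohen-Macaulay module: finitely generated with depth equal to its dimension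
`dim (R / ann M)`. -/
def IsCohenMacaulayModule [IsLocalRing R] (M : Type*) [AddCommGroup M] [Module R M] : Prop :=
  Module.Finite R M ∧
    (moduleDepth R M : WithBot ℕ∞) = ringKrullDim (R ⧸ Module.annihilator R M)

/-- The Krull dimension of a ring as a natural number. -/
noncomputable def krullDimNat : ℕ := ENat.toNat ((ringKrullDim R).unbotD 0)

open CategoryTheory in
/-- `Ext^n_R(k, M)` where `k` is the residue field of the local ring `R`. -/
noncomputable def extResidue [IsLocalRing R] (M : Type u) [AddCommGroup M] [Module R M]
    (n : ℕ) : ModuleCat R :=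
  ((Ext R (ModuleCat.{u} R) n).obj
    (Opposite.op (ModuleCat.of R (ResidueField R)))).obj (ModuleCat.of R M)

/-- The Cohen-Macaulay type `t(R) = dim_k Ext^d_R(k, R)` of a local ring of dimension `d`. -/
noncomputable def CMtype [IsLocalRing R] : ℕ∞ :=
  modLength R (extResidue R R (krullDimNat R))

/-- A canonical module of a local ring: a finitely generated module `W` with
`dim_k Ext^i_R(k, W) = δ_{i, dim R}`. -/
def IsCanonicalModule [IsLocalRing R] (W : Type u) [AddCommGroup W] [Module R W] : Prop :=
  Module.Finite R W ∧ ∀ n : ℕ,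
    modLength R (extResidue R W n) = if n = krullDimNat R then 1 else 0

/-- A Gorenstein local ring: Cohen-Macaulay of type one. -/
def IsGorensteinLocalRing [IsLocalRing R] : Prop :=
  IsCohenMacaulayLocalRing R ∧ CMtype R = 1

/-- A regular local ring: Noetherian and the maximal ideal is generated by `dim R`
elements. -/
def IsRegularLocalRing' [IsLocalRing R] : Prop :=
  IsNoetherianRing R ∧ ∃ s : Finset R,
    Ideal.span (s : Set R) = maximalIdeal R ∧ (s.card : WithBot ℕ∞) = ringKrullDim R

/-- A complete intersection: the completion is a regular local ring modulo an ideal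
generated by a regular sequence. -/
def IsCompleteIntersectionLocalRing [IsLocalRing R] : Prop :=
  ∃ (T : Type u) (_ : CommRing T) (_ : IsLocalRing T),
    IsRegularLocalRing' T ∧ ∃ rs : List T, RingTheory.Sequence.IsRegular T rs ∧
      Nonempty ((AdicCompletion (maximalIdeal R) R) ≃+* (T ⧸ Ideal.ofList rs))

/-- The colon `(A : B) = {q ∈ Q | qB ⊆ A}` of two `R`-submodules of an `R`-algebra `Q`. -/
def qcolon {Q : Type*} [CommRing Q] [Algebra R Q] (A B : Submodule R Q) : Submodule R Q where
  carrier := {q | ∀ x ∈ B, q * x ∈ A}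
  add_mem' := fun {p q} hp hq x hx => by
    rw [add_mul]; exact A.add_mem (hp x hx) (hq x hx)
  zero_mem' := fun x hx => by rw [zero_mul]; exact A.zero_mem
  smul_mem' := fun c q hq x hx => by
    rw [Algebra.smul_mul_assoc]; exact A.smul_mem c (hq x hx)

/-- The image of an ideal in the total ring of fractions, as an `R`-submodule. -/
noncomputable def idealToFrac (J : Ideal R) : Submodule R (FractionRing R) :=
  Submodule.map (Algebra.linearMap R (FractionRing R)) J

/-- `z R` is a (minimal, i.e. principal) reduction of the fractional ideal `H`:
`z ∈ H` and `H^{n+1} = z H^n` for some `n`. -/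
def IsPrincipalReduction {Q : Type*} [CommRing Q] [Algebra R Q] (z : Q)
    (H : Submodule R Q) : Prop :=
  z ∈ H ∧ ∃ n : ℕ, H ^ (n + 1) = Submodule.span R {z} * H ^ n

/-- A one-dimensional local Cohen-Macaulay ring is almost Gorenstein if it has a canonical
module which is a fractional ideal `ω` with `R ⊆ ω ⊆ (m : m)`. -/
def IsAlmostGorensteinOneDim (S : Type u) [CommRing S] [IsLocalRing S] : Prop :=
  ∃ W : Submodule S (FractionRing S), IsFractional (nonZeroDivisors S) W ∧
    IsCanonicalModule S ↥W ∧ (1 : FractionRing S) ∈ W ∧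
    W * (Submodule.map (Algebra.linearMap S (FractionRing S)) (maximalIdeal S)) ≤
      Submodule.map (Algebra.linearMap S (FractionRing S)) (maximalIdeal S)

open Filter in
/-- The Hilbert-Samuel multiplicity `e⁰_m(C)` of a module `C` over a local ring,
defined as `lim_t d! · λ(C/m^t C) / t^d` where `d = dim C`. -/
noncomputable def hsMultiplicity (S : Type u) [CommRing S] [IsLocalRing S]
    (C : Type*) [AddCommGroup C] [Module S C] : ℝ :=
  limUnder atTop (fun t : ℕ =>
    ((Nat.factorial (krullDimNat (S ⧸ Module.annihilator S C)) *
        (modLength S (C ⧸ ((maximalIdeal S ^ t) • (⊤ : Submodule S C)))).toNat : ℕ) : ℝ) /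
      (t : ℝ) ^ (krullDimNat (S ⧸ Module.annihilator S C)))

/-- The minimal number of generators `μ(C) = λ(C / m C)` of a module over a local ring. -/
noncomputable def muGen (S : Type u) [CommRing S] [IsLocalRing S]
    (C : Type*) [AddCommGroup C] [Module S C] : ℕ∞ :=
  modLength S (C ⧸ ((maximalIdeal S) • (⊤ : Submodule S C)))

/-- A Cohen-Macaulay local ring possessing a canonical module is almost Gorenstein if there
is an exact sequence `0 → S → ω_S → C → 0` with `μ(C) = e⁰_m(C)` (Goto-Takahashi-Taniguchi). -/
def IsAlmostGorensteinLocalRing (S : Type u) [CommRing S] [IsLocalRing S] : Prop :=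
  ∃ W : ModuleCat.{u} S, IsCanonicalModule S W ∧
    ∃ f : S →ₗ[S] W, Function.Injective f ∧
      ∃ m : ℕ, muGen S (W ⧸ LinearMap.range f) = m ∧
        (m : ℝ) = hsMultiplicity S (W ⧸ LinearMap.range f)

/-- The height of an ideal: the infimum of the heights of the primes containing it. -/
noncomputable def idealHeight (J : Ideal R) : ℕ∞ :=
  ⨅ (p : PrimeSpectrum R) (_ : J ≤ p.asIdeal), Order.height p

end CA


section Aux
open RIab

variable {R : Type u} [CommRing R] [IsLocalRing R] {I : Ideal R} (a b : R)

lemma mapFrac_algebraMap (r : R) :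
    mapFrac I a b (algebraMap R (FractionRing R) r) =
      algebraMap (RIab R I a b) (FractionRing (RIab R I a b)) (algebraMap R (RIab R I a b) r) :=
  IsLocalization.map_eq _ _

lemma isUnit_algebraMap_algebraMap {c : R} (hc : c ∈ nonZeroDivisors R) :
    IsUnit (algebraMap (RIab R I a b) (FractionRing (RIab R I a b)) (algebraMap R (RIab R I a b) c)) :=
  IsLocalization.map_units (FractionRing (RIab R I a b))
    ⟨algebraMap R (RIab R I a b) c, algebraMap_mem_nonZeroDivisors hc⟩

lemma tau_spec (i₀ : R) (h₀ : i₀ ∈ I) (hreg : i₀ ∈ nonZeroDivisors R) :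
    tau I a b i₀ h₀ hreg * algebraMap (RIab R I a b) (FractionRing (RIab R I a b))
        (algebraMap R (RIab R I a b) i₀) =
      algebraMap (RIab R I a b) (FractionRing (RIab R I a b)) ⟨0, i₀, h₀⟩ :=
  IsLocalization.mk'_spec _ _ _

lemma mapFrac_mul_tau (i₀ : R) (h₀ : i₀ ∈ I) (hreg : i₀ ∈ nonZeroDivisors R)
    {i : R} (hi : i ∈ I) :
    mapFrac I a b (algebraMap R (FractionRing R) i) * tau I a b i₀ h₀ hreg =
      algebraMap (RIab R I a b) (FractionRing (RIab R I a b)) ⟨0, i, hi⟩ := by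
  have hu := isUnit_algebraMap_algebraMap a b (I := I) hreg
  refine hu.mul_right_cancel ?_
  rw [mul_assoc, tau_spec, mapFrac_algebraMap, ← map_mul, ← map_mul]
  congr 1
  ext <;> simp <;> ring

lemma algebraMap_decomp (i₀ : R) (h₀ : i₀ ∈ I) (hreg : i₀ ∈ nonZeroDivisors R)
    (s : RIab R I a b) :
    algebraMap (RIab R I a b) (FractionRing (RIab R I a b)) s =
      mapFrac I a b (algebraMap R (FractionRing R) s.r) +
        mapFrac I a b (algebraMap R (FractionRing R) s.i) * tau I a b i₀ h₀ hreg := by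
  rw [mapFrac_algebraMap, mapFrac_mul_tau a b i₀ h₀ hreg s.hi, ← map_add]
  congr 1
  ext <;> simp

lemma tau_sq (i₀ : R) (h₀ : i₀ ∈ I) (hreg : i₀ ∈ nonZeroDivisors R) :
    tau I a b i₀ h₀ hreg * tau I a b i₀ h₀ hreg +
      mapFrac I a b (algebraMap R (FractionRing R) a) * tau I a b i₀ h₀ hreg +
      mapFrac I a b (algebraMap R (FractionRing R) b) = 0 := by
  have hu := isUnit_algebraMap_algebraMap a b (I := I) hreg
  refine (hu.mul hu).mul_right_cancel ?_
  have h1 := tau_spec a b i₀ h₀ hreg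
  have h3 : ((⟨0, i₀, h₀⟩ : RIab R I a b) * ⟨0, i₀, h₀⟩ +
      algebraMap R (RIab R I a b) a * ⟨0, i₀, h₀⟩ * algebraMap R (RIab R I a b) i₀ +
      algebraMap R (RIab R I a b) b * algebraMap R (RIab R I a b) i₀ *
        algebraMap R (RIab R I a b) i₀) = 0 := by
    ext <;> simp <;> ring
  have h3' := congrArg (algebraMap (RIab R I a b) (FractionRing (RIab R I a b))) h3
  simp only [map_add, map_mul, map_zero] at h3'
  rw [mapFrac_algebraMap a b a, mapFrac_algebraMap a b b]
  set U := algebraMap (RIab R I a b) (FractionRing (RIab R I a b))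
    (algebraMap R (RIab R I a b) i₀)
  set A0 := algebraMap (RIab R I a b) (FractionRing (RIab R I a b)) (⟨0, i₀, h₀⟩ : RIab R I a b)
  set τ := tau I a b i₀ h₀ hreg
  set Ca := algebraMap (RIab R I a b) (FractionRing (RIab R I a b)) (algebraMap R (RIab R I a b) a)
  set Cb := algebraMap (RIab R I a b) (FractionRing (RIab R I a b)) (algebraMap R (RIab R I a b) b)
  linear_combination (τ * U + A0 + Ca * U) * h1 + h3'

lemma mul_formula (i₀ : R) (h₀ : i₀ ∈ I) (hreg : i₀ ∈ nonZeroDivisors R)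
    (s : RIab R I a b) (X Y : FractionRing R) :
    algebraMap (RIab R I a b) (FractionRing (RIab R I a b)) s *
        (mapFrac I a b X + mapFrac I a b Y * tau I a b i₀ h₀ hreg) =
      mapFrac I a b (algebraMap R (FractionRing R) s.r * X
          - algebraMap R (FractionRing R) b * (algebraMap R (FractionRing R) s.i * Y)) +
        mapFrac I a b (algebraMap R (FractionRing R) s.r * Y
          + algebraMap R (FractionRing R) s.i * X
          - algebraMap R (FractionRing R) a * (algebraMap R (FractionRing R) s.i * Y)) *
          tau I a b i₀ h₀ hreg := by
  rw [algebraMap_decomp a b i₀ h₀ hreg s]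
  simp only [map_add, map_sub, map_mul]
  linear_combination (mapFrac I a b (algebraMap R (FractionRing R) s.i) *
    mapFrac I a b Y) * tau_sq a b i₀ h₀ hreg

end Aux
section Aux2
open RIab

variable {R : Type u} [CommRing R] [IsLocalRing R] {I : Ideal R} (a b : R)

lemma indep (i₀ : R) (h₀ : i₀ ∈ I) (hreg : i₀ ∈ nonZeroDivisors R)
    {p q : FractionRing R}
    (h : mapFrac I a b p + mapFrac I a b q * tau I a b i₀ h₀ hreg = 0) :
    p = 0 ∧ q = 0 := by
  obtain ⟨⟨c, d⟩, hp⟩ := IsLocalization.surj (nonZeroDivisors R) p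
  obtain ⟨⟨c', d'⟩, hq⟩ := IsLocalization.surj (nonZeroDivisors R) q
  -- multiply h by f(ι d) * f(ι d') * U
  have h2 := congrArg (· * (mapFrac I a b (algebraMap R (FractionRing R) (d : R)) *
      mapFrac I a b (algebraMap R (FractionRing R) (d' : R)) *
      algebraMap (RIab R I a b) (FractionRing (RIab R I a b))
        (algebraMap R (RIab R I a b) i₀))) h
  simp only [zero_mul] at h2
  have hexp : mapFrac I a b (p * algebraMap R (FractionRing R) (d : R)) *
        mapFrac I a b (algebraMap R (FractionRing R) (d' : R)) *
        algebraMap (RIab R I a b) (FractionRing (RIab R I a b))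
          (algebraMap R (RIab R I a b) i₀) +
      mapFrac I a b (q * algebraMap R (FractionRing R) (d' : R)) *
        mapFrac I a b (algebraMap R (FractionRing R) (d : R)) *
        (tau I a b i₀ h₀ hreg *
          algebraMap (RIab R I a b) (FractionRing (RIab R I a b))
            (algebraMap R (RIab R I a b) i₀)) = 0 := by
    rw [map_mul, map_mul]; linear_combination h2
  rw [hp, hq, tau_spec] at hexp
  simp only [mapFrac_algebraMap, ← map_mul, ← map_add] at hexp
  have h0 := IsFractionRing.injective (RIab R I a b) (FractionRing (RIab R I a b))
    (hexp.trans (map_zero _).symm)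
  have hr := congrArg RIab.r h0
  have hi := congrArg RIab.i h0
  simp only [RIab.add_r, RIab.add_i, RIab.mul_r, RIab.mul_i, RIab.algebraMap_r,
    RIab.algebraMap_i, RIab.zero_r, RIab.zero_i, mul_zero, zero_mul, sub_zero, add_zero,
    zero_add, zero_sub, mul_one, one_mul] at hr hi
  -- hr : c * d' * i₀ (+ stuff) = 0 ; hi : c' * d * i₀ = 0 roughly
  have hc0 : c = 0 := (mem_nonZeroDivisors_iff_right.mp d'.2) _ ((mem_nonZeroDivisors_iff_right.mp hreg) _ (show c * (d' : R) * i₀ = 0 by linear_combination hr))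
  have hc'0 : c' = 0 := (mem_nonZeroDivisors_iff_right.mp d.2) _ ((mem_nonZeroDivisors_iff_right.mp hreg) _ (show c' * (d : R) * i₀ = 0 by linear_combination hi))
  constructor
  · have hu : IsUnit (algebraMap R (FractionRing R) (d : R)) :=
      IsLocalization.map_units (FractionRing R) d
    have : p * algebraMap R (FractionRing R) (d : R) = 0 := by
      rw [hp, hc0, map_zero]
    obtain ⟨v, hv⟩ := hu.exists_right_inv
    calc p = p * (algebraMap R (FractionRing R) (d : R) * v) := by rw [hv, mul_one]
    _ = 0 := by rw [← mul_assoc, this, zero_mul]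
  · have : q * algebraMap R (FractionRing R) (d' : R) = 0 := by
      rw [hq, hc'0, map_zero]
    obtain ⟨v, hv⟩ := (IsLocalization.map_units (FractionRing R) d').exists_right_inv
    calc q = q * (algebraMap R (FractionRing R) (d' : R) * v) := by rw [hv, mul_one]
    _ = 0 := by rw [← mul_assoc, this, zero_mul]

end Aux2
section Aux3
open RIab Polynomial

variable {R : Type u} [CommRing R] [IsLocalRing R] {I : Ideal R} (a b : R)

lemma mapFrac_isIntegral {u : FractionRing R} (hu : IsIntegral R u) :
    IsIntegral (RIab R I a b) (mapFrac I a b u) := by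
  obtain ⟨p, hp, hp0⟩ := hu
  refine ⟨p.map (algebraMap R (RIab R I a b)), hp.map _, ?_⟩
  have hcomp : (algebraMap (RIab R I a b) (FractionRing (RIab R I a b))).comp
      (algebraMap R (RIab R I a b)) =
      (mapFrac I a b : FractionRing R →+* FractionRing (RIab R I a b)).comp
        (algebraMap R (FractionRing R)) :=
    RingHom.ext fun r => (mapFrac_algebraMap a b r).symm
  rw [eval₂_map, hcomp, ← Polynomial.hom_eval₂, hp0, map_zero]

lemma tau_isIntegral (i₀ : R) (h₀ : i₀ ∈ I) (hreg : i₀ ∈ nonZeroDivisors R) :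
    IsIntegral (RIab R I a b) (tau I a b i₀ h₀ hreg) := by
  refine ⟨X ^ 2 + (Polynomial.C (algebraMap R (RIab R I a b) a) * X + Polynomial.C (algebraMap R (RIab R I a b) b)),
    ?_, ?_⟩
  · have hdeg : (Polynomial.C (algebraMap R (RIab R I a b) a) * X +
        Polynomial.C (algebraMap R (RIab R I a b) b)).degree < 2 := by
      refine lt_of_le_of_lt (Polynomial.degree_add_le _ _) (max_lt ?_ ?_)
      · refine lt_of_le_of_lt (Polynomial.degree_mul_le _ _) ?_
        refine lt_of_le_of_lt (add_le_add Polynomial.degree_C_le le_rfl) ?_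
        rw [Polynomial.degree_X]
        decide
      · exact lt_of_le_of_lt Polynomial.degree_C_le (by decide)
    exact Polynomial.monic_X_pow_add (n := 2) hdeg
  · simp only [eval₂_add, eval₂_mul, eval₂_pow, eval₂_X, eval₂_C]
    have := tau_sq a b i₀ h₀ hreg
    rw [mapFrac_algebraMap, mapFrac_algebraMap] at this
    linear_combination this

end Aux3
section Aux4
open RIab

lemma RIab_smul_r {R : Type u} [CommRing R] {I : Ideal R} {a b : R} (c : R)
    (s : RIab R I a b) : (c • s).r = c * s.r := by
  rw [Algebra.smul_def]
  show c * s.r - b * (0 * s.i) = c * s.r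
  ring

lemma RIab_smul_i {R : Type u} [CommRing R] {I : Ideal R} {a b : R} (c : R)
    (s : RIab R I a b) : (c • s).i = c * s.i := by
  rw [Algebra.smul_def]
  show c * s.i + s.r * 0 - a * (0 * s.i) = c * s.i
  ring

lemma fg_of_mul_le_range {R : Type u} [CommRing R] [IsNoetherianRing R]
    (H : Submodule R (FractionRing R)) {c : R} (hc : c ∈ nonZeroDivisors R)
    (hH : ∀ x ∈ H, ∃ r : R, algebraMap R (FractionRing R) r
        = algebraMap R (FractionRing R) c * x) :
    H.FG := by
  set g : FractionRing R →ₗ[R] FractionRing R :=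
    Algebra.lmul R (FractionRing R) (algebraMap R (FractionRing R) c) with hg
  have hga : ∀ x : FractionRing R, g x = algebraMap R (FractionRing R) c * x := fun _ => rfl
  have hginj : Function.Injective g := by
    intro x y hxy
    rw [hga, hga] at hxy
    exact (IsLocalization.map_units (FractionRing R)
      (⟨c, hc⟩ : nonZeroDivisors R)).mul_left_cancel hxy
  refine Submodule.fg_of_fg_map_injective g hginj ?_
  have hle : Submodule.map g H ≤ LinearMap.range (Algebra.linearMap R (FractionRing R)) := by
    rintro _ ⟨x, hx, rfl⟩
    obtain ⟨r, hr⟩ := hH x hx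
    exact ⟨r, by rw [Algebra.linearMap_apply, hr, hga]⟩
  have heq : Submodule.map g H = Submodule.map (Algebra.linearMap R (FractionRing R))
      (Submodule.comap (Algebra.linearMap R (FractionRing R)) (Submodule.map g H)) := by
    rw [Submodule.map_comap_eq, inf_eq_right.mpr hle]
  rw [heq]
  exact Submodule.FG.map _ (IsNoetherian.noetherian _)

lemma isIntegral_of_principal_reduction {R : Type u} [CommRing R] [IsNoetherianRing R]
    (H : Submodule R (FractionRing R)) (hHfg : H.FG)
    (z : (FractionRing R)ˣ) (hzH : (z : FractionRing R) ∈ H)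
    {n : ℕ} (hzn : H ^ (n + 1) = Submodule.span R {(z : FractionRing R)} * H ^ n)
    {u : FractionRing R} (hu : u ∈ H) :
    IsIntegral R (u * ((z⁻¹ : (FractionRing R)ˣ) : FractionRing R)) := by
  set ζ : FractionRing R := (z : FractionRing R) with hζ
  set ζi : FractionRing R := ((z⁻¹ : (FractionRing R)ˣ) : FractionRing R) with hζi
  have hinv : ζi * ζ = 1 := z.inv_mul
  set x := u * ζi with hx
  have hstep : ∀ w ∈ H ^ n, x * w ∈ H ^ n := by
    intro w hw
    have h1 : u * w ∈ H ^ (n + 1) := by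
      rw [pow_succ']
      exact Submodule.mul_mem_mul hu hw
    rw [hzn] at h1
    have h2 : ∀ v ∈ Submodule.span R {ζ} * H ^ n, ζi * v ∈ H ^ n := by
      intro v hv
      refine Submodule.mul_induction_on hv ?_ ?_
      · intro p hp q hq
        obtain ⟨r, rfl⟩ := Submodule.mem_span_singleton.mp hp
        have h3 : ζi * (r • ζ * q) = r • q := by
          rw [smul_mul_assoc, mul_smul_comm]
          congr 1
          rw [← mul_assoc, hinv, one_mul]
        rw [h3]
        exact Submodule.smul_mem _ _ hq
      · intro p q hp hq
        rw [mul_add]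
        exact Submodule.add_mem _ hp hq
    have h4 := h2 _ h1
    have h5 : x * w = ζi * (u * w) := by rw [hx]; ring
    rw [h5]
    exact h4
  have hpow : ∀ m : ℕ, ∀ w ∈ H ^ n, x ^ m * w ∈ H ^ n := by
    intro m
    induction m with
    | zero => intro w hw; simpa using hw
    | succ k ih =>
      intro w hw
      have h6 : x ^ (k + 1) * w = x * (x ^ k * w) := by ring
      rw [h6]
      exact hstep _ (ih w hw)
  set g2 : FractionRing R →ₗ[R] FractionRing R :=
    Algebra.lmul R (FractionRing R) (ζi ^ n) with hg2
  set N₂ := Submodule.map g2 (H ^ n) with hN₂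
  have hN₂fg : N₂.FG := (hHfg.pow n).map _
  have hxpow : ∀ m : ℕ, x ^ m ∈ N₂ := by
    intro m
    refine ⟨x ^ m * ζ ^ n, hpow m _ (Submodule.pow_mem_pow H hzH n), ?_⟩
    show ζi ^ n * (x ^ m * ζ ^ n) = x ^ m
    have h7 : ζi ^ n * ζ ^ n = 1 := by rw [← mul_pow, hinv, one_pow]
    calc ζi ^ n * (x ^ m * ζ ^ n) = ζi ^ n * ζ ^ n * x ^ m := by ring
    _ = x ^ m := by rw [h7, one_mul]
  have hle : Subalgebra.toSubmodule (Algebra.adjoin R {x}) ≤ N₂ := by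
    intro v hv
    have hv' : v ∈ Algebra.adjoin R {x} := hv
    rw [Algebra.adjoin_singleton_eq_range_aeval] at hv'
    obtain ⟨p, hp⟩ := hv'
    rw [← hp]
    show (Polynomial.aeval x) p ∈ N₂
    rw [Polynomial.aeval_eq_sum_range]
    exact Submodule.sum_mem _ fun i _ => Submodule.smul_mem _ _ (hxpow i)
  have hNoeth : IsNoetherian R ↥N₂ := isNoetherian_of_fg_of_noetherian N₂ hN₂fg
  have hfg : (Subalgebra.toSubmodule (Algebra.adjoin R {x})).FG := by
    have h8 : Submodule.map N₂.subtype (Submodule.comap N₂.subtype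
        (Subalgebra.toSubmodule (Algebra.adjoin R {x}))) =
        Subalgebra.toSubmodule (Algebra.adjoin R {x}) := by
      rw [Submodule.map_comap_subtype, inf_eq_right.mpr hle]
    rw [← h8]
    exact Submodule.FG.map _ (IsNoetherian.noetherian _)
  exact IsIntegral.of_mem_of_fg _ hfg _ (Algebra.self_mem_adjoin_singleton R x)

end Aux4
section MainAux
open RIab

set_option maxHeartbeats 2000000 in
theorem main_aux {R : Type u} [CommRing R] [IsLocalRing R] [IsNoetherianRing R]
    (I : Ideal R) (a b : R)
    (W H : Submodule R (FractionRing R))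
    (hWH : W ≤ H)
    (hHW : ∀ x ∈ H, ∀ j ∈ I, x * algebraMap R (FractionRing R) j ∈ W)
    (hHmem : ∀ q : FractionRing R,
      (∀ j ∈ I, q * algebraMap R (FractionRing R) j ∈ W) → q ∈ H)
    (c : R) (hc : c ∈ nonZeroDivisors R)
    (hcW : ∀ w ∈ W, ∃ r : R, algebraMap R (FractionRing R) r
        = algebraMap R (FractionRing R) c * w)
    (z : (FractionRing R)ˣ)
    (hzH : (z : FractionRing R) ∈ H)
    (n : ℕ) (hzn : H ^ (n + 1) = Submodule.span R {(z : FractionRing R)} * H ^ n)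
    (i₀ : R) (hi₀ : i₀ ∈ I) (hi₀reg : i₀ ∈ nonZeroDivisors R) :
    ∃ K : Submodule (RIab R I a b) (FractionRing (RIab R I a b)),
      (K : Set (FractionRing (RIab R I a b))) =
        {q | ∃ x ∈ H, ∃ y ∈ W,
          q = RIab.mapFrac I a b (x * ((z⁻¹ : (FractionRing R)ˣ) : FractionRing R)) +
              RIab.mapFrac I a b (y * ((z⁻¹ : (FractionRing R)ˣ) : FractionRing R)) *
                RIab.tau I a b i₀ hi₀ hi₀reg} ∧
      IsFractional (nonZeroDivisors (RIab R I a b)) K ∧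
      (∀ s : RIab R I a b,
        algebraMap (RIab R I a b) (FractionRing (RIab R I a b)) s ∈ K) ∧
      (∀ q ∈ K, q ∈ integralClosure (RIab R I a b) (FractionRing (RIab R I a b))) ∧
      ∃ e : ↥K → (RIab R I a b →ₗ[R] ↥W),
        Function.Bijective e ∧
        (∀ k₁ k₂ : ↥K, e (k₁ + k₂) = e k₁ + e k₂) ∧
        (∀ (s : RIab R I a b) (k : ↥K) (x : RIab R I a b),
          (e (s • k)) x = (e k) (s * x)) := by
  classical
  have hsmulW : ∀ (r : R), ∀ w ∈ W, algebraMap R (FractionRing R) r * w ∈ W := by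
    intro r w hw
    have h := W.smul_mem r hw
    rwa [Algebra.smul_def] at h
  have hsmulH : ∀ (r : R), ∀ x ∈ H, algebraMap R (FractionRing R) r * x ∈ H := by
    intro r x hx
    have h := H.smul_mem r hx
    rwa [Algebra.smul_def] at h
  -- the submodule K
  let K : Submodule (RIab R I a b) (FractionRing (RIab R I a b)) :=
    { carrier := {q | ∃ x ∈ H, ∃ y ∈ W,
        q = RIab.mapFrac I a b (x * ((z⁻¹ : (FractionRing R)ˣ) : FractionRing R)) +
            RIab.mapFrac I a b (y * ((z⁻¹ : (FractionRing R)ˣ) : FractionRing R)) *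
              RIab.tau I a b i₀ hi₀ hi₀reg}
      zero_mem' := ⟨0, H.zero_mem, 0, W.zero_mem, by simp⟩
      add_mem' := by
        rintro q q' ⟨x, hx, y, hy, rfl⟩ ⟨x', hx', y', hy', rfl⟩
        refine ⟨x + x', H.add_mem hx hx', y + y', W.add_mem hy hy', ?_⟩
        simp only [add_mul, map_add]
        ring
      smul_mem' := by
        rintro s q ⟨x, hx, y, hy, rfl⟩
        refine ⟨algebraMap R (FractionRing R) s.r * x -
            algebraMap R (FractionRing R) b * (algebraMap R (FractionRing R) s.i * y), ?_,
          algebraMap R (FractionRing R) s.r * y + algebraMap R (FractionRing R) s.i * x -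
            algebraMap R (FractionRing R) a * (algebraMap R (FractionRing R) s.i * y), ?_, ?_⟩
        · refine hHmem _ ?_
          intro j hj
          have h1 : (algebraMap R (FractionRing R) s.r * x -
              algebraMap R (FractionRing R) b * (algebraMap R (FractionRing R) s.i * y)) *
                algebraMap R (FractionRing R) j
              = algebraMap R (FractionRing R) s.r * (x * algebraMap R (FractionRing R) j)
                - algebraMap R (FractionRing R) (b * (s.i * j)) * y := by
            simp only [map_mul]; ring
          rw [h1]
          exact W.sub_mem (hsmulW _ _ (hHW x hx j hj)) (hsmulW _ _ hy)
        · have h1 : algebraMap R (FractionRing R) s.r * y +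
              algebraMap R (FractionRing R) s.i * x -
              algebraMap R (FractionRing R) a * (algebraMap R (FractionRing R) s.i * y)
              = algebraMap R (FractionRing R) s.r * y + x * algebraMap R (FractionRing R) s.i
                - algebraMap R (FractionRing R) (a * s.i) * y := by
            simp only [map_mul]; ring
          rw [h1]
          exact W.sub_mem (W.add_mem (hsmulW _ _ hy) (hHW x hx s.i s.hi)) (hsmulW _ _ hy)
        · show s • _ = _
          rw [Algebra.smul_def, mul_formula a b i₀ hi₀ hi₀reg s]
          congr 1
          · congr 1; ring
          · congr 2; ring }
  have hmemK : ∀ k : ↥K, ∃ x, x ∈ H ∧ ∃ y, y ∈ W ∧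
      (k : FractionRing (RIab R I a b)) =
        RIab.mapFrac I a b (x * ((z⁻¹ : (FractionRing R)ˣ) : FractionRing R)) +
          RIab.mapFrac I a b (y * ((z⁻¹ : (FractionRing R)ˣ) : FractionRing R)) *
            RIab.tau I a b i₀ hi₀ hi₀reg := fun k => k.2
  refine ⟨K, rfl, ?_, ?_, ?_, ?_⟩
  · -- IsFractional
    obtain ⟨⟨rd, d⟩, hd⟩ := IsLocalization.surj (nonZeroDivisors R)
      ((z⁻¹ : (FractionRing R)ˣ) : FractionRing R)
    refine ⟨algebraMap R (RIab R I a b) (c * (i₀ * i₀) * (d : R)),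
      RIab.algebraMap_mem_nonZeroDivisors
        (mul_mem (mul_mem hc (mul_mem hi₀reg hi₀reg)) d.2), ?_⟩
    rintro q ⟨x, hx, y, hy, rfl⟩
    obtain ⟨w₁, hw₁⟩ := hcW _ (hHW x hx i₀ hi₀)
    obtain ⟨w₂, hw₂⟩ := hcW _ hy
    have hc1 : algebraMap R (FractionRing R) (c * (i₀ * i₀) * (d : R)) *
        (x * ((z⁻¹ : (FractionRing R)ˣ) : FractionRing R))
        = algebraMap R (FractionRing R) (w₁ * (i₀ * rd)) := by
      simp only [map_mul]
      rw [show algebraMap R (FractionRing R) c *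
          (algebraMap R (FractionRing R) i₀ * algebraMap R (FractionRing R) i₀) *
          algebraMap R (FractionRing R) (d : R) *
          (x * ((z⁻¹ : (FractionRing R)ˣ) : FractionRing R))
        = (algebraMap R (FractionRing R) c * (x * algebraMap R (FractionRing R) i₀)) *
          algebraMap R (FractionRing R) i₀ *
          (((z⁻¹ : (FractionRing R)ˣ) : FractionRing R) * algebraMap R (FractionRing R) (d : R))
        from by ring, ← hw₁, hd]
      ring
    have hc2 : algebraMap R (FractionRing R) (c * (i₀ * i₀) * (d : R)) *
        (y * ((z⁻¹ : (FractionRing R)ˣ) : FractionRing R))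
        = algebraMap R (FractionRing R) (w₂ * (i₀ * rd)) *
          algebraMap R (FractionRing R) i₀ := by
      simp only [map_mul]
      rw [show algebraMap R (FractionRing R) c *
          (algebraMap R (FractionRing R) i₀ * algebraMap R (FractionRing R) i₀) *
          algebraMap R (FractionRing R) (d : R) *
          (y * ((z⁻¹ : (FractionRing R)ˣ) : FractionRing R))
        = (algebraMap R (FractionRing R) c * y) * algebraMap R (FractionRing R) i₀ *
          algebraMap R (FractionRing R) i₀ *
          (((z⁻¹ : (FractionRing R)ˣ) : FractionRing R) * algebraMap R (FractionRing R) (d : R))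
        from by ring, ← hw₂, hd]
      ring
    refine ⟨algebraMap R (RIab R I a b) (w₁ * (i₀ * rd)) +
      algebraMap R (RIab R I a b) (w₂ * (i₀ * rd)) * ⟨0, i₀, hi₀⟩, ?_⟩
    rw [Algebra.smul_def, ← mapFrac_algebraMap a b, mul_add,
      ← mul_assoc (RIab.mapFrac I a b (algebraMap R (FractionRing R) (c * (i₀ * i₀) * (d : R)))),
      ← map_mul (RIab.mapFrac I a b), ← map_mul (RIab.mapFrac I a b), hc1, hc2,
      map_mul (RIab.mapFrac I a b), mul_assoc, mapFrac_mul_tau a b i₀ hi₀ hi₀reg hi₀,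
      mapFrac_algebraMap a b]
    rw [map_add, map_mul, mapFrac_algebraMap a b,
      ← map_mul (algebraMap (RIab R I a b) (FractionRing (RIab R I a b)))]
  · -- algebraMap mem K
    intro s
    refine ⟨algebraMap R (FractionRing R) s.r * (z : FractionRing R), hsmulH _ _ hzH,
      (z : FractionRing R) * algebraMap R (FractionRing R) s.i, hHW _ hzH s.i s.hi, ?_⟩
    rw [algebraMap_decomp a b i₀ hi₀ hi₀reg s]
    congr 2
    · rw [mul_assoc, Units.mul_inv, mul_one]
    · rw [mul_comm ((z : FractionRing R)), mul_assoc, Units.mul_inv, mul_one]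
  · -- integral closure
    rintro q ⟨x, hx, y, hy, rfl⟩
    have hHfg : H.FG := by
      refine fg_of_mul_le_range H (mul_mem hc hi₀reg) ?_
      intro u hu
      obtain ⟨w, hw⟩ := hcW _ (hHW u hu i₀ hi₀)
      refine ⟨w, ?_⟩
      rw [hw, map_mul]
      ring
    have hint : ∀ u ∈ H, IsIntegral R (u * ((z⁻¹ : (FractionRing R)ˣ) : FractionRing R)) :=
      fun u hu => isIntegral_of_principal_reduction H hHfg z hzH hzn hu
    have h1 : RIab.mapFrac I a b (x * ((z⁻¹ : (FractionRing R)ˣ) : FractionRing R)) ∈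
        integralClosure (RIab R I a b) (FractionRing (RIab R I a b)) :=
      mapFrac_isIntegral a b (hint x hx)
    have h2 : RIab.mapFrac I a b (y * ((z⁻¹ : (FractionRing R)ˣ) : FractionRing R)) ∈
        integralClosure (RIab R I a b) (FractionRing (RIab R I a b)) :=
      mapFrac_isIntegral a b (hint y (hWH hy))
    have h3 : RIab.tau I a b i₀ hi₀ hi₀reg ∈
        integralClosure (RIab R I a b) (FractionRing (RIab R I a b)) :=
      tau_isIntegral a b i₀ hi₀ hi₀reg
    exact Subalgebra.add_mem _ h1 (Subalgebra.mul_mem _ h2 h3)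
  · -- the Hom description
    have hiu : IsUnit (algebraMap R (FractionRing R) i₀) :=
      IsLocalization.map_units (FractionRing R) (⟨i₀, hi₀reg⟩ : nonZeroDivisors R)
    have huniq : ∀ x x' y y' : FractionRing R,
        RIab.mapFrac I a b (x * ((z⁻¹ : (FractionRing R)ˣ) : FractionRing R)) +
          RIab.mapFrac I a b (y * ((z⁻¹ : (FractionRing R)ˣ) : FractionRing R)) *
            RIab.tau I a b i₀ hi₀ hi₀reg =
        RIab.mapFrac I a b (x' * ((z⁻¹ : (FractionRing R)ˣ) : FractionRing R)) +
          RIab.mapFrac I a b (y' * ((z⁻¹ : (FractionRing R)ˣ) : FractionRing R)) *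
            RIab.tau I a b i₀ hi₀ hi₀reg → x = x' ∧ y = y' := by
      intro x x' y y' hxy
      have h0 : RIab.mapFrac I a b ((x - x') * ((z⁻¹ : (FractionRing R)ˣ) : FractionRing R)) +
          RIab.mapFrac I a b ((y - y') * ((z⁻¹ : (FractionRing R)ˣ) : FractionRing R)) *
            RIab.tau I a b i₀ hi₀ hi₀reg = 0 := by
        simp only [sub_mul, map_sub]
        linear_combination hxy
      obtain ⟨h1, h2⟩ := indep a b i₀ hi₀ hi₀reg h0
      constructor
      · have h3 : (x - x') * (((z⁻¹ : (FractionRing R)ˣ) : FractionRing R) *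
            (z : FractionRing R)) = 0 := by rw [← mul_assoc, h1, zero_mul]
        rw [z.inv_mul, mul_one] at h3
        exact sub_eq_zero.mp h3
      · have h3 : (y - y') * (((z⁻¹ : (FractionRing R)ˣ) : FractionRing R) *
            (z : FractionRing R)) = 0 := by rw [← mul_assoc, h2, zero_mul]
        rw [z.inv_mul, mul_one] at h3
        exact sub_eq_zero.mp h3
    choose X hX Y hY hrep using hmemK
    have hmemW : ∀ (k : ↥K) (s : RIab R I a b),
        algebraMap R (FractionRing R) s.r * Y k + algebraMap R (FractionRing R) s.i * X k -
          algebraMap R (FractionRing R) (a * s.i) * Y k ∈ W := by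
      intro k s
      refine W.sub_mem (W.add_mem (hsmulW _ _ (hY k)) ?_) (hsmulW _ _ (hY k))
      rw [mul_comm]
      exact hHW _ (hX k) s.i s.hi
    refine ⟨fun k =>
      { toFun := fun s => ⟨algebraMap R (FractionRing R) s.r * Y k +
          algebraMap R (FractionRing R) s.i * X k -
          algebraMap R (FractionRing R) (a * s.i) * Y k, hmemW k s⟩
        map_add' := by
          intro s t
          apply Subtype.ext
          show algebraMap R (FractionRing R) (s + t).r * Y k +
              algebraMap R (FractionRing R) (s + t).i * X k -
              algebraMap R (FractionRing R) (a * (s + t).i) * Y k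
            = (algebraMap R (FractionRing R) s.r * Y k +
              algebraMap R (FractionRing R) s.i * X k -
              algebraMap R (FractionRing R) (a * s.i) * Y k) +
              (algebraMap R (FractionRing R) t.r * Y k +
              algebraMap R (FractionRing R) t.i * X k -
              algebraMap R (FractionRing R) (a * t.i) * Y k)
          simp only [RIab.add_r, RIab.add_i, map_add, map_mul]
          ring
        map_smul' := by
          intro cc s
          apply Subtype.ext
          show algebraMap R (FractionRing R) (cc • s).r * Y k +
              algebraMap R (FractionRing R) (cc • s).i * X k -
              algebraMap R (FractionRing R) (a * (cc • s).i) * Y k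
            = cc • (algebraMap R (FractionRing R) s.r * Y k +
              algebraMap R (FractionRing R) s.i * X k -
              algebraMap R (FractionRing R) (a * s.i) * Y k)
          rw [RIab_smul_r, RIab_smul_i, Algebra.smul_def]
          simp only [map_mul]
          ring }, ⟨?_, ?_⟩, ?_, ?_⟩
    · -- injective
      intro k k' hkk
      have h1 : algebraMap R (FractionRing R) (1 : R) * Y k +
          algebraMap R (FractionRing R) (0 : R) * X k -
          algebraMap R (FractionRing R) (a * 0) * Y k
          = algebraMap R (FractionRing R) (1 : R) * Y k' +
          algebraMap R (FractionRing R) (0 : R) * X k' -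
          algebraMap R (FractionRing R) (a * 0) * Y k' :=
        Subtype.ext_iff.mp (LinearMap.congr_fun hkk (1 : RIab R I a b))
      simp only [map_one, map_zero, mul_zero, one_mul, zero_mul, sub_zero, add_zero] at h1
      have h2 : algebraMap R (FractionRing R) (0 : R) * Y k +
          algebraMap R (FractionRing R) i₀ * X k -
          algebraMap R (FractionRing R) (a * i₀) * Y k
          = algebraMap R (FractionRing R) (0 : R) * Y k' +
          algebraMap R (FractionRing R) i₀ * X k' -
          algebraMap R (FractionRing R) (a * i₀) * Y k' :=
        Subtype.ext_iff.mp (LinearMap.congr_fun hkk (⟨0, i₀, hi₀⟩ : RIab R I a b))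
      simp only [map_zero, zero_mul, zero_add] at h2
      rw [h1] at h2
      have h3 : algebraMap R (FractionRing R) i₀ * X k
          = algebraMap R (FractionRing R) i₀ * X k' := by linear_combination h2
      have h4 := hiu.mul_left_cancel h3
      apply Subtype.ext
      rw [hrep k, hrep k', h1, h4]
    · -- surjective
      intro φ
      obtain ⟨u, hu⟩ := hiu
      have hq : ∀ (j : R) (hj : j ∈ I),
          (↑(φ ⟨0, i₀, hi₀⟩) : FractionRing R) * ↑u⁻¹ * algebraMap R (FractionRing R) j
            = ↑(φ ⟨0, j, hj⟩) := by
        intro j hj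
        have hsm : (i₀ • (⟨0, j, hj⟩ : RIab R I a b)) = j • (⟨0, i₀, hi₀⟩ : RIab R I a b) := by
          ext <;> simp [RIab_smul_r, RIab_smul_i, mul_comm]
        have h1 : algebraMap R (FractionRing R) i₀ * (↑(φ ⟨0, j, hj⟩) : FractionRing R)
            = algebraMap R (FractionRing R) j * ↑(φ ⟨0, i₀, hi₀⟩) := by
          have e1 : (↑(i₀ • φ ⟨0, j, hj⟩) : FractionRing R) = ↑(j • φ ⟨0, i₀, hi₀⟩) := by
            rw [← map_smul, ← map_smul, hsm]
          rw [Submodule.coe_smul, Submodule.coe_smul, Algebra.smul_def, Algebra.smul_def] at e1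
          exact e1
        calc (↑(φ ⟨0, i₀, hi₀⟩) : FractionRing R) * ↑u⁻¹ * algebraMap R (FractionRing R) j
            = (algebraMap R (FractionRing R) j *
              (↑(φ ⟨0, i₀, hi₀⟩) : FractionRing R)) * ↑u⁻¹ := by ring
          _ = (algebraMap R (FractionRing R) i₀ * ↑(φ ⟨0, j, hj⟩)) * ↑u⁻¹ := by rw [h1]
          _ = ((u : FractionRing R) * ↑u⁻¹) * ↑(φ ⟨0, j, hj⟩) := by rw [hu]; ring
          _ = ↑(φ ⟨0, j, hj⟩) := by rw [Units.mul_inv, one_mul]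
      have hxH : (↑(φ ⟨0, i₀, hi₀⟩) : FractionRing R) * ↑u⁻¹ +
          algebraMap R (FractionRing R) a * ↑(φ 1) ∈ H := by
        refine hHmem _ ?_
        intro j hj
        have h1 : ((↑(φ ⟨0, i₀, hi₀⟩) : FractionRing R) * ↑u⁻¹ +
            algebraMap R (FractionRing R) a * ↑(φ 1)) * algebraMap R (FractionRing R) j
            = ↑(φ ⟨0, j, hj⟩) + algebraMap R (FractionRing R) (a * j) * ↑(φ 1) := by
          rw [add_mul, hq j hj, map_mul]
          ring
        rw [h1]
        exact W.add_mem (φ ⟨0, j, hj⟩).2 (hsmulW _ _ (φ 1).2)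
      refine ⟨⟨RIab.mapFrac I a b (((↑(φ ⟨0, i₀, hi₀⟩) : FractionRing R) * ↑u⁻¹ +
          algebraMap R (FractionRing R) a * ↑(φ 1)) *
            ((z⁻¹ : (FractionRing R)ˣ) : FractionRing R)) +
        RIab.mapFrac I a b ((↑(φ 1) : FractionRing R) *
            ((z⁻¹ : (FractionRing R)ˣ) : FractionRing R)) *
          RIab.tau I a b i₀ hi₀ hi₀reg,
        ⟨_, hxH, _, (φ 1).2, rfl⟩⟩, ?_⟩
      set k0 : ↥K := ⟨RIab.mapFrac I a b (((↑(φ ⟨0, i₀, hi₀⟩) : FractionRing R) * ↑u⁻¹ +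
          algebraMap R (FractionRing R) a * ↑(φ 1)) *
            ((z⁻¹ : (FractionRing R)ˣ) : FractionRing R)) +
        RIab.mapFrac I a b ((↑(φ 1) : FractionRing R) *
            ((z⁻¹ : (FractionRing R)ˣ) : FractionRing R)) *
          RIab.tau I a b i₀ hi₀ hi₀reg,
        ⟨_, hxH, _, (φ 1).2, rfl⟩⟩ with hk0
      obtain ⟨hXk, hYk⟩ := huniq (X k0)
        ((↑(φ ⟨0, i₀, hi₀⟩) : FractionRing R) * ↑u⁻¹ +
          algebraMap R (FractionRing R) a * ↑(φ 1))
        (Y k0) (↑(φ 1) : FractionRing R) ((hrep k0).symm)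
      apply LinearMap.ext
      intro s
      apply Subtype.ext
      show algebraMap R (FractionRing R) s.r * Y k0 +
          algebraMap R (FractionRing R) s.i * X k0 -
          algebraMap R (FractionRing R) (a * s.i) * Y k0 = ↑(φ s)
      rw [hXk, hYk]
      have hsdec : s = s.r • (1 : RIab R I a b) + ⟨0, s.i, s.hi⟩ := by
        ext <;> simp [RIab_smul_r, RIab_smul_i]
      conv_rhs => rw [hsdec]
      rw [map_add, map_smul, Submodule.coe_add, Submodule.coe_smul, Algebra.smul_def,
        ← hq s.i s.hi, map_mul]
      ring
    · -- additive
      intro k₁ k₂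
      have hsum : (↑(k₁ + k₂) : FractionRing (RIab R I a b)) =
          RIab.mapFrac I a b ((X k₁ + X k₂) * ((z⁻¹ : (FractionRing R)ˣ) : FractionRing R)) +
          RIab.mapFrac I a b ((Y k₁ + Y k₂) * ((z⁻¹ : (FractionRing R)ˣ) : FractionRing R)) *
            RIab.tau I a b i₀ hi₀ hi₀reg := by
        rw [Submodule.coe_add, hrep k₁, hrep k₂]
        simp only [add_mul, map_add]
        ring
      obtain ⟨hXs, hYs⟩ := huniq _ _ _ _ ((hrep (k₁ + k₂)).symm.trans hsum)
      apply LinearMap.ext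
      intro s
      apply Subtype.ext
      show algebraMap R (FractionRing R) s.r * Y (k₁ + k₂) +
          algebraMap R (FractionRing R) s.i * X (k₁ + k₂) -
          algebraMap R (FractionRing R) (a * s.i) * Y (k₁ + k₂)
        = (algebraMap R (FractionRing R) s.r * Y k₁ +
          algebraMap R (FractionRing R) s.i * X k₁ -
          algebraMap R (FractionRing R) (a * s.i) * Y k₁) +
          (algebraMap R (FractionRing R) s.r * Y k₂ +
          algebraMap R (FractionRing R) s.i * X k₂ -
          algebraMap R (FractionRing R) (a * s.i) * Y k₂)
      rw [hXs, hYs]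
      ring
    · -- module compatibility
      intro s k uu
      have hk' : (↑(s • k) : FractionRing (RIab R I a b)) =
          RIab.mapFrac I a b ((algebraMap R (FractionRing R) s.r * X k -
            algebraMap R (FractionRing R) b * (algebraMap R (FractionRing R) s.i * Y k)) *
              ((z⁻¹ : (FractionRing R)ˣ) : FractionRing R)) +
          RIab.mapFrac I a b ((algebraMap R (FractionRing R) s.r * Y k +
            algebraMap R (FractionRing R) s.i * X k -
            algebraMap R (FractionRing R) a * (algebraMap R (FractionRing R) s.i * Y k)) *
              ((z⁻¹ : (FractionRing R)ˣ) : FractionRing R)) *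
            RIab.tau I a b i₀ hi₀ hi₀reg := by
        have h0 : (↑(s • k) : FractionRing (RIab R I a b)) =
            algebraMap (RIab R I a b) (FractionRing (RIab R I a b)) s * ↑k := by
          rw [Submodule.coe_smul, Algebra.smul_def]
        rw [h0, hrep k, mul_formula a b i₀ hi₀ hi₀reg s]
        congr 1
        · congr 1; ring
        · congr 2; ring
      obtain ⟨hXs, hYs⟩ := huniq _ _ _ _ ((hrep (s • k)).symm.trans hk')
      apply Subtype.ext
      show algebraMap R (FractionRing R) uu.r * Y (s • k) +
          algebraMap R (FractionRing R) uu.i * X (s • k) -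
          algebraMap R (FractionRing R) (a * uu.i) * Y (s • k)
        = algebraMap R (FractionRing R) (s * uu).r * Y k +
          algebraMap R (FractionRing R) (s * uu).i * X k -
          algebraMap R (FractionRing R) (a * (s * uu).i) * Y k
      rw [hXs, hYs]
      simp only [RIab.mul_r, RIab.mul_i, map_mul, map_add, map_sub]
      ring

end MainAux

/-- Proposition 2.1.  In the one-dimensional setting, with `z R` a minimal
reduction of `(ω_R : I)`, the set `K = { x/z + (y/z)t : x ∈ (ω_R : I), y ∈ ω_R }` is a
canonical ideal of `R(I)_{a,b}`: a fractional ideal, isomorphic as an `R(I)_{a,b}`-module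
to `Hom_R(R(I)_{a,b}, ω_R)` (with module structure by precomposition with multiplication),
and `R(I)_{a,b} ⊆ K ⊆ \overline{R(I)_{a,b}}`. -/
theorem stmt8 (R : Type u) [CommRing R] [IsLocalRing R] [IsNoetherianRing R]
    (hCM : IsCohenMacaulayLocalRing R) (hdim : ringKrullDim R = 1)
    [Infinite (ResidueField R)]
    (WR : Submodule R (FractionRing R))
    (hWfrac : IsFractional (nonZeroDivisors R) WR)
    (hWcan : IsCanonicalModule R ↥WR)
    (hW1 : (1 : FractionRing R) ∈ WR)
    (hWint : ∀ w ∈ WR, w ∈ integralClosure R (FractionRing R))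
    (I : Ideal R) (hI0 : I ≠ ⊥) [Fact (I ≠ ⊤)]
    (hIm : I.radical = maximalIdeal R)
    (z : (FractionRing R)ˣ)
    (hz : IsPrincipalReduction R (z : FractionRing R) (qcolon R WR (idealToFrac R I)))
    (a b : R) :
    ∀ (i₀ : R) (hi₀ : i₀ ∈ I) (hi₀reg : i₀ ∈ nonZeroDivisors R),
    ∃ K : Submodule (RIab R I a b) (FractionRing (RIab R I a b)),
      (K : Set (FractionRing (RIab R I a b))) =
        {q | ∃ x ∈ qcolon R WR (idealToFrac R I), ∃ y ∈ WR,
          q = RIab.mapFrac I a b (x * ((z⁻¹ : (FractionRing R)ˣ) : FractionRing R)) +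
              RIab.mapFrac I a b (y * ((z⁻¹ : (FractionRing R)ˣ) : FractionRing R)) *
                RIab.tau I a b i₀ hi₀ hi₀reg} ∧
      IsFractional (nonZeroDivisors (RIab R I a b)) K ∧
      (∀ s : RIab R I a b,
        algebraMap (RIab R I a b) (FractionRing (RIab R I a b)) s ∈ K) ∧
      (∀ q ∈ K, q ∈ integralClosure (RIab R I a b) (FractionRing (RIab R I a b))) ∧
      ∃ e : ↥K → (RIab R I a b →ₗ[R] ↥WR),
        Function.Bijective e ∧
        (∀ k₁ k₂ : ↥K, e (k₁ + k₂) = e k₁ + e k₂) ∧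
        (∀ (s : RIab R I a b) (k : ↥K) (x : RIab R I a b),
          (e (s • k)) x = (e k) (s * x)) := by
  intro i₀ hi₀ hi₀reg
  obtain ⟨hzH, n, hzn⟩ := hz
  obtain ⟨c, hc, hcW'⟩ := hWfrac
  have hWH : WR ≤ qcolon R WR (idealToFrac R I) := by
    intro y hy w hw
    obtain ⟨j, hj, rfl⟩ := hw
    show y * algebraMap R (FractionRing R) j ∈ WR
    rw [mul_comm, ← Algebra.smul_def]
    exact WR.smul_mem j hy
  have hHW : ∀ x ∈ qcolon R WR (idealToFrac R I), ∀ j ∈ I,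
      x * algebraMap R (FractionRing R) j ∈ WR := by
    intro x hx j hj
    exact hx _ ⟨j, hj, rfl⟩
  have hHmem : ∀ q : FractionRing R,
      (∀ j ∈ I, q * algebraMap R (FractionRing R) j ∈ WR) →
      q ∈ qcolon R WR (idealToFrac R I) := by
    intro q h w hw
    obtain ⟨j, hj, rfl⟩ := hw
    exact h j hj
  have hcW : ∀ w ∈ WR, ∃ r : R, algebraMap R (FractionRing R) r
      = algebraMap R (FractionRing R) c * w := by
    intro w hw
    obtain ⟨r, hr⟩ := hcW' w hw
    refine ⟨r, ?_⟩
    rw [hr, Algebra.smul_def]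
  exact main_aux I a b WR (qcolon R WR (idealToFrac R I)) hWH hHW hHmem c hc hcW z hzH n hzn
    i₀ hi₀ hi₀reg
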